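/- arXiv:2303.14734 — 8 statements merged into one kernel-verified Lean document; each statement's English description precedes it below -/
import Mathlib

section
/- In the asymptotic setting (sample estimators replaced by population values), the difference between the variance component of the expected squared error of the two-feature linear model ŷ = ŵ_1 x_1 + ŵ_2 x_2 and that of the aggregated model ŷ = ŵ (x_1+x_2)/2 equals σ²/(n−1), which is nonnegative. -/
/-- Asymptotically (sample estimators replaced by population values),
the difference between the model variance of the two-feature regression and that of
the aggregated (averaged-feature) regression equals `σ²/(n-1) ≥ 0`. -/
theorem asymptotic_variance_difference
    (n : ℕ) (hn : 1 < n) (σ2 v1 v2 c : ℝ) (hσ2 : 0 ≤ σ2)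
    (hpos : c ^ 2 < v1 * v2) (hsum : 0 < v1 + v2 + 2 * c) :
    σ2 * (v1 * v2 + v2 * v1 - 2 * c * c) / (((n : ℝ) - 1) * (v1 * v2 - c ^ 2))
      - (v1 + v2 + 2 * c) * σ2 / (((n : ℝ) - 1) * (v1 + v2 + 2 * c))
      = σ2 / ((n : ℝ) - 1)
    ∧ 0 ≤ σ2 / ((n : ℝ) - 1) := by
  have hn1 : (0 : ℝ) < (n : ℝ) - 1 := by
    have : (1 : ℝ) < n := by exact_mod_cast hn
    linarith
  have hd : (0 : ℝ) < v1 * v2 - c ^ 2 := by linarith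
  constructor
  · field_simp
    ring
  · positivity
end

section
/- Under the assumption that σ_{x_1} = σ_{x_2} = σ_x and σ̂_{x_1} = σ̂_{x_2} = σ̂_x, the finite-sample difference between the model variance of the two-feature OLS regression and that of the averaged-feature regression equals (σ²/(n−1)) · (σ²_x (1 − ρ_{x_1,x_2})) / (σ̂²_x (1 − ρ̂_{x_1,x_2})), which is nonnegative whenever |ρ_{x_1,x_2}| ≤ 1 and |ρ̂_{x_1,x_2}| < 1. -/
/-- Under equal population variances (`σ²ₓ`) and equal sample
variances (`σ̂²ₓ`) of the two features, the finite-sample difference between the model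
variance of the two-feature OLS regression and that of the averaged-feature regression
equals `(σ²/(n-1)) · (σ²ₓ(1-ρ)) / (σ̂²ₓ(1-ρ̂))`, which is nonnegative whenever
`|ρ| ≤ 1` and `|ρ̂| < 1`. -/
theorem finite_sample_variance_difference
    (n : ℕ) (hn : 1 < n) (σ2 vx vxh ρ ρh : ℝ)
    (hσ2 : 0 ≤ σ2) (hvx : 0 ≤ vx) (hvxh : 0 < vxh)
    (hρ : |ρ| ≤ 1) (hρh : |ρh| < 1)
    (c ch : ℝ) (hc : c = ρ * vx) (hch : ch = ρh * vxh) :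
    σ2 * (vx * vxh + vx * vxh - 2 * c * ch) / (((n : ℝ) - 1) * (vxh * vxh - ch ^ 2))
      - (vx + vx + 2 * c) * σ2 / (((n : ℝ) - 1) * (vxh + vxh + 2 * ch))
      = (σ2 / ((n : ℝ) - 1)) * ((vx * (1 - ρ)) / (vxh * (1 - ρh)))
    ∧ 0 ≤ (σ2 / ((n : ℝ) - 1)) * ((vx * (1 - ρ)) / (vxh * (1 - ρh))) := by
  obtain ⟨hρh1, hρh2⟩ := abs_lt.mp hρh
  have hn1 : (0:ℝ) < (n:ℝ) - 1 := by
    have : (1:ℝ) < n := by exact_mod_cast hn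
    linarith
  have h1 : (1:ℝ) - ρh ≠ 0 := by linarith
  have h2 : (1:ℝ) + ρh ≠ 0 := by linarith
  have hvxh' : vxh ≠ 0 := ne_of_gt hvxh
  have hn1' : ((n:ℝ) - 1) ≠ 0 := ne_of_gt hn1
  constructor
  · subst hc hch
    have e1 : vxh * vxh - (ρh * vxh) ^ 2 = vxh ^ 2 * ((1 - ρh) * (1 + ρh)) := by ring
    have e2 : vxh + vxh + 2 * (ρh * vxh) = 2 * vxh * (1 + ρh) := by ring
    rw [e1, e2]
    field_simp
    ring
  · have hρ1 : ρ ≤ 1 := (abs_le.mp hρ).2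
    apply mul_nonneg (div_nonneg hσ2 hn1.le)
    apply div_nonneg (mul_nonneg hvx (by linarith))
    exact mul_nonneg hvxh.le (by linarith)
end

section
/- In the asymptotic setting, aggregating two features x_1, x_2 with their average increases the squared bias by Δ_bias = σ²_{x_1} σ²_{x_2} (1 − ρ²_{x_1,x_2}) (w_1 − w_2)² / σ²_{x_1+x_2}; in particular, if σ_{x_1} = σ_{x_2} = 1 this equals (1 − ρ_{x_1,x_2})(w_1 − w_2)²/2. -/
open MeasureTheory

/-- In the asymptotic setting, aggregating two mean-zero features
`x₁, x₂` (with variances `σ²₁, σ²₂` and correlation `ρ`) via their average increases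
the squared bias by
`Δ_bias = σ²₁ σ²₂ (1 - ρ²)(w₁ - w₂)² / σ²_{x₁+x₂}`,
which equals `(1 - ρ)(w₁ - w₂)²/2` when `σ₁ = σ₂ = 1`.  Here the bias of the
aggregated model is `E[(w* x̄ - (w₁x₁ + w₂x₂))²]` with the population OLS coefficient
`w* = 2(w₁σ²₁ + w₂σ²₂ + (w₁+w₂)cov)/σ²_{x₁+x₂}`, and the two-feature model is unbiased. -/
theorem asymptotic_bias_increase
    {Ω : Type*} [MeasurableSpace Ω] (μ : Measure Ω) [IsProbabilityMeasure μ]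
    (x1 x2 : Ω → ℝ) (σ1 σ2 ρ w1 w2 : ℝ)
    (hσ1 : 0 < σ1) (hσ2 : 0 < σ2) (hρ : |ρ| ≤ 1)
    (hInt1 : Integrable x1 μ) (hInt2 : Integrable x2 μ)
    (hInt11 : Integrable (fun ω => x1 ω * x1 ω) μ)
    (hInt22 : Integrable (fun ω => x2 ω * x2 ω) μ)
    (hInt12 : Integrable (fun ω => x1 ω * x2 ω) μ)
    (hm1 : (∫ ω, x1 ω ∂μ) = 0) (hm2 : (∫ ω, x2 ω ∂μ) = 0)
    (hv1 : (∫ ω, x1 ω * x1 ω ∂μ) = σ1 ^ 2) (hv2 : (∫ ω, x2 ω * x2 ω ∂μ) = σ2 ^ 2)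
    (hcov : (∫ ω, x1 ω * x2 ω ∂μ) = ρ * σ1 * σ2)
    (S : ℝ) (hS : S = σ1 ^ 2 + σ2 ^ 2 + 2 * (ρ * σ1 * σ2)) (hSpos : 0 < S)
    (wstar : ℝ)
    (hwstar : wstar = 2 * (w1 * σ1 ^ 2 + w2 * σ2 ^ 2 + (w1 + w2) * (ρ * σ1 * σ2)) / S) :
    (∫ ω, (wstar * ((x1 ω + x2 ω) / 2) - (w1 * x1 ω + w2 * x2 ω)) ^ 2 ∂μ)
      = σ1 ^ 2 * σ2 ^ 2 * (1 - ρ ^ 2) * (w1 - w2) ^ 2 / S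
    ∧ (σ1 = 1 → σ2 = 1 →
        σ1 ^ 2 * σ2 ^ 2 * (1 - ρ ^ 2) * (w1 - w2) ^ 2 / S
          = (1 - ρ) * (w1 - w2) ^ 2 / 2) := by
  have hSne : S ≠ 0 := ne_of_gt hSpos
  set a : ℝ := wstar / 2 - w1 with ha
  set b : ℝ := wstar / 2 - w2 with hb
  have key : (fun ω => (wstar * ((x1 ω + x2 ω) / 2) - (w1 * x1 ω + w2 * x2 ω)) ^ 2)
      = fun ω => (a ^ 2 * (x1 ω * x1 ω) + (2 * a * b) * (x1 ω * x2 ω))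
          + b ^ 2 * (x2 ω * x2 ω) := by
    funext ω; simp only [ha, hb]; ring
  have e1 : (∫ ω, ((a ^ 2 * (x1 ω * x1 ω) + (2 * a * b) * (x1 ω * x2 ω))
        + b ^ 2 * (x2 ω * x2 ω)) ∂μ)
      = (∫ ω, (a ^ 2 * (x1 ω * x1 ω) + (2 * a * b) * (x1 ω * x2 ω)) ∂μ)
        + ∫ ω, b ^ 2 * (x2 ω * x2 ω) ∂μ :=
    integral_add ((hInt11.const_mul _).add (hInt12.const_mul _)) (hInt22.const_mul _)
  have e2 : (∫ ω, (a ^ 2 * (x1 ω * x1 ω) + (2 * a * b) * (x1 ω * x2 ω)) ∂μ)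
      = (∫ ω, a ^ 2 * (x1 ω * x1 ω) ∂μ) + ∫ ω, (2 * a * b) * (x1 ω * x2 ω) ∂μ :=
    integral_add (hInt11.const_mul _) (hInt12.const_mul _)
  have hint : (∫ ω, (wstar * ((x1 ω + x2 ω) / 2) - (w1 * x1 ω + w2 * x2 ω)) ^ 2 ∂μ)
      = a ^ 2 * σ1 ^ 2 + (2 * a * b) * (ρ * σ1 * σ2) + b ^ 2 * σ2 ^ 2 := by
    rw [key, e1, e2, integral_const_mul, integral_const_mul, integral_const_mul,
      hv1, hv2, hcov]
  have hA : a = (w2 - w1) * (σ2 ^ 2 + ρ * σ1 * σ2) / S := by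
    rw [ha, hwstar]; field_simp; rw [hS]; ring
  have hB : b = (w1 - w2) * (σ1 ^ 2 + ρ * σ1 * σ2) / S := by
    rw [hb, hwstar]; field_simp; rw [hS]; ring
  constructor
  · rw [hint, hA, hB]
    field_simp
    rw [hS]
    ring
  · intro h1 h2
    subst h1 h2
    have hs2 : S = 2 + 2 * ρ := by rw [hS]; ring
    have hne : (2 : ℝ) + 2 * ρ ≠ 0 := by rw [← hs2]; exact hSne
    rw [hs2]
    have hne' : (1 : ℝ) + ρ ≠ 0 := by intro h; apply hne; linarith
    field_simp
    ring
end

section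
/- Under equal variances σ_{x_1}=σ_{x_2}=σ_x and equal sample variances, the finite-sample increase in squared bias from aggregating x_1 and x_2 with their average equals σ²_x (1 − ρ_{x_1,x_2})(w_1 − w_2)²/2, independent of the sample quantities. -/
/-- Under equal population variances (`σ²ₓ = vx`) and equal sample
variances (`σ̂²ₓ = vxh`), the finite-sample increase in squared bias from aggregating
`x₁` and `x₂` with their average (the bias of the one-dimensional model, the
two-dimensional model being unbiased) equals `σ²ₓ (1 - ρ)(w₁ - w₂)²/2`,
independently of the sample quantities. -/
theorem finite_sample_bias_increase
    (w1 w2 vx vxh ρ ρh : ℝ)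
    (hvx : 0 ≤ vx) (hvxh : 0 < vxh)
    (c ch : ℝ) (hc : c = ρ * vx) (hch : ch = ρh * vxh)
    (S Sh : ℝ) (hS : S = vx + vx + 2 * c) (hSh : Sh = vxh + vxh + 2 * ch)
    (hShpos : 0 < Sh)
    (A : ℝ) (hA : A = w1 * vxh + w2 * vxh + (w1 + w2) * ch) :
    (S / Sh ^ 2) * A ^ 2
      + (w1 ^ 2 * vx + w2 ^ 2 * vx + 2 * w1 * w2 * c)
      - (2 / Sh) * (w1 * vx + w2 * vx + (w1 + w2) * c) * A
      = vx * (1 - ρ) * (w1 - w2) ^ 2 / 2 := by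
  have hA2 : A = (w1 + w2) * (Sh / 2) := by
    rw [hA, hSh, hch]; ring
  subst hA2 hc hS
  have hSh' : Sh ≠ 0 := ne_of_gt hShpos
  field_simp
  ring
end

section
/- In the asymptotic setting with general unit variances for x_1, x_2 (i.e., σ_{x_1}, σ_{x_2} arbitrary), the decrease in variance σ²/(n−1) exceeds the bias increase σ²_{x_1}σ²_{x_2}(1−ρ²)(w_1−w_2)²/σ²_{x_1+x_2} if and only if ρ²_{x_1,x_2} ≥ 1 − σ² σ²_{x_1+x_2} / ((n−1) σ²_{x_1} σ²_{x_2} (w_1 − w_2)²). -/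
/-- In the asymptotic setting with general variances for `x₁, x₂`,
the decrease in variance `σ²/(n-1)` is at least the bias increase
`σ²₁σ²₂(1-ρ²)(w₁-w₂)²/σ²_{x₁+x₂}` if and only if
`ρ² ≥ 1 - σ² σ²_{x₁+x₂} / ((n-1) σ²₁ σ²₂ (w₁-w₂)²)`. -/
theorem aggregation_condition_2d_general
    (n : ℕ) (hn : 1 < n) (σ2 σ1x σ2x w1 w2 ρ : ℝ)
    (hσ2 : 0 ≤ σ2) (hσ1x : 0 < σ1x) (hσ2x : 0 < σ2x)
    (hw : w1 ≠ w2) (hρ : ρ ∈ Set.Icc (-1 : ℝ) 1)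
    (S : ℝ) (hS : S = σ1x ^ 2 + σ2x ^ 2 + 2 * ρ * σ1x * σ2x) (hSpos : 0 < S) :
    σ2 / ((n : ℝ) - 1) ≥ σ1x ^ 2 * σ2x ^ 2 * (1 - ρ ^ 2) * (w1 - w2) ^ 2 / S
      ↔ ρ ^ 2 ≥ 1 - σ2 * S / (((n : ℝ) - 1) * σ1x ^ 2 * σ2x ^ 2 * (w1 - w2) ^ 2) := by
  have hn' : (0:ℝ) < (n:ℝ) - 1 := by
    have : (1:ℝ) < n := by exact_mod_cast hn
    linarith
  have hwne : w1 - w2 ≠ 0 := sub_ne_zero.mpr hw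
  have hK : 0 < ((n:ℝ) - 1) * σ1x ^ 2 * σ2x ^ 2 * (w1 - w2) ^ 2 := by positivity
  rw [ge_iff_le, ge_iff_le, div_le_div_iff₀ hSpos hn', sub_le_comm, le_div_iff₀ hK]
  constructor <;> intro h <;> nlinarith [h]
end

section
/- In a three-feature asymptotic linear model with unit feature variances, aggregating x_1 and x_2 with their average increases the squared bias by Δ_bias = (1/2)(1−ρ_{12})(w_1−w_2)² + w_3(w_1−w_2)(ρ_{13}−ρ_{23}) + w_3²(ρ_{13}−ρ_{23})²/(2(1−ρ_{12})), where ρ_{ij} denotes the correlation between x_i and x_j. -/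
open MeasureTheory

set_option maxHeartbeats 1000000

/-- In a three-feature asymptotic linear model
`y = w₁x₁ + w₂x₂ + w₃x₃ + ε` with mean-zero, unit-variance features, aggregating
`x₁` and `x₂` with their average increases the squared bias by
`Δ = (1/2)(1-ρ₁₂)(w₁-w₂)² + w₃(w₁-w₂)(ρ₁₃-ρ₂₃) + w₃²(ρ₁₃-ρ₂₃)²/(2(1-ρ₁₂))`.
Here `F` is the squared bias of the population OLS regression of `y` on
`x̄ = (x₁+x₂)/2` and `G` that of the population OLS regression of `y` on `(x₁, x₂)`. -/
theorem asymptotic_bias_increase_3d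
    {Ω : Type*} [MeasurableSpace Ω] (μ : Measure Ω) [IsProbabilityMeasure μ]
    (x1 x2 x3 : Ω → ℝ) (ρ12 ρ13 ρ23 w1 w2 w3 : ℝ)
    (hρ12 : ρ12 ∈ Set.Ioo (-1 : ℝ) 1) (hρ13 : |ρ13| ≤ 1) (hρ23 : |ρ23| ≤ 1)
    (hInt1 : Integrable x1 μ) (hInt2 : Integrable x2 μ) (hInt3 : Integrable x3 μ)
    (hInt11 : Integrable (fun ω => x1 ω * x1 ω) μ)
    (hInt22 : Integrable (fun ω => x2 ω * x2 ω) μ)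
    (hInt33 : Integrable (fun ω => x3 ω * x3 ω) μ)
    (hInt12 : Integrable (fun ω => x1 ω * x2 ω) μ)
    (hInt13 : Integrable (fun ω => x1 ω * x3 ω) μ)
    (hInt23 : Integrable (fun ω => x2 ω * x3 ω) μ)
    (hm1 : (∫ ω, x1 ω ∂μ) = 0) (hm2 : (∫ ω, x2 ω ∂μ) = 0) (hm3 : (∫ ω, x3 ω ∂μ) = 0)
    (hv1 : (∫ ω, x1 ω * x1 ω ∂μ) = 1) (hv2 : (∫ ω, x2 ω * x2 ω ∂μ) = 1)
    (hv3 : (∫ ω, x3 ω * x3 ω ∂μ) = 1)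
    (hc12 : (∫ ω, x1 ω * x2 ω ∂μ) = ρ12)
    (hc13 : (∫ ω, x1 ω * x3 ω ∂μ) = ρ13)
    (hc23 : (∫ ω, x2 ω * x3 ω ∂μ) = ρ23)
    -- population OLS coefficient of the regression of `y` on `x̄ = (x₁+x₂)/2`:
    (wstar : ℝ)
    (hwstar : wstar = ((w1 + w2) * (1 + ρ12) + w3 * (ρ13 + ρ23)) / (1 + ρ12))
    -- population OLS coefficients of the regression of `y` on `(x₁, x₂)` are
    -- `(w₁ + a w₃, w₂ + b w₃)` with:
    (a b : ℝ)
    (ha : a = (ρ13 - ρ12 * ρ23) / (1 - ρ12 ^ 2))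
    (hb : b = (ρ23 - ρ12 * ρ13) / (1 - ρ12 ^ 2))
    (F G : ℝ)
    (hF : F = ∫ ω, (wstar * ((x1 ω + x2 ω) / 2)
        - (w1 * x1 ω + w2 * x2 ω + w3 * x3 ω)) ^ 2 ∂μ)
    (hG : G = ∫ ω, ((w1 + a * w3) * x1 ω + (w2 + b * w3) * x2 ω
        - (w1 * x1 ω + w2 * x2 ω + w3 * x3 ω)) ^ 2 ∂μ) :
    F - G = (1 / 2) * (1 - ρ12) * (w1 - w2) ^ 2
        + w3 * (w1 - w2) * (ρ13 - ρ23)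
        + w3 ^ 2 * (ρ13 - ρ23) ^ 2 / (2 * (1 - ρ12)) := by
  have quad : ∀ A B C : ℝ, (∫ ω, (A * x1 ω + B * x2 ω + C * x3 ω) ^ 2 ∂μ)
      = A ^ 2 + B ^ 2 + C ^ 2 + 2 * A * B * ρ12 + 2 * A * C * ρ13 + 2 * B * C * ρ23 := by
    intro A B C
    have hfun : (fun ω => (A * x1 ω + B * x2 ω + C * x3 ω) ^ 2)
        = fun ω => A ^ 2 * (x1 ω * x1 ω) + B ^ 2 * (x2 ω * x2 ω) + C ^ 2 * (x3 ω * x3 ω)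
          + (2 * A * B) * (x1 ω * x2 ω) + (2 * A * C) * (x1 ω * x3 ω)
          + (2 * B * C) * (x2 ω * x3 ω) := by
      funext ω; ring
    rw [hfun]
    have i1 := hInt11.const_mul (A ^ 2)
    have i2 := hInt22.const_mul (B ^ 2)
    have i3 := hInt33.const_mul (C ^ 2)
    have i4 := hInt12.const_mul (2 * A * B)
    have i5 := hInt13.const_mul (2 * A * C)
    have i6 := hInt23.const_mul (2 * B * C)
    have j2 : Integrable (fun ω => A ^ 2 * (x1 ω * x1 ω) + B ^ 2 * (x2 ω * x2 ω)) μ := i1.add i2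
    have j3 : Integrable (fun ω => A ^ 2 * (x1 ω * x1 ω) + B ^ 2 * (x2 ω * x2 ω)
        + C ^ 2 * (x3 ω * x3 ω)) μ := j2.add i3
    have j4 : Integrable (fun ω => A ^ 2 * (x1 ω * x1 ω) + B ^ 2 * (x2 ω * x2 ω)
        + C ^ 2 * (x3 ω * x3 ω) + 2 * A * B * (x1 ω * x2 ω)) μ := j3.add i4
    have j5 : Integrable (fun ω => A ^ 2 * (x1 ω * x1 ω) + B ^ 2 * (x2 ω * x2 ω)
        + C ^ 2 * (x3 ω * x3 ω) + 2 * A * B * (x1 ω * x2 ω)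
        + 2 * A * C * (x1 ω * x3 ω)) μ := j4.add i5
    rw [integral_add j5 i6, integral_add j4 i5, integral_add j3 i4,
      integral_add j2 i3, integral_add i1 i2,
      integral_const_mul, integral_const_mul, integral_const_mul, integral_const_mul,
      integral_const_mul, integral_const_mul, hv1, hv2, hv3, hc12, hc13, hc23]
    ring
  have hF' : F = ∫ ω, ((wstar / 2 - w1) * x1 ω + (wstar / 2 - w2) * x2 ω
      + (-w3) * x3 ω) ^ 2 ∂μ := by
    rw [hF]; congr 1; funext ω; ring
  have hG' : G = ∫ ω, ((a * w3) * x1 ω + (b * w3) * x2 ω + (-w3) * x3 ω) ^ 2 ∂μ := by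
    rw [hG]; congr 1; funext ω; ring
  rw [quad] at hF' hG'
  have h1 : (1 : ℝ) + ρ12 ≠ 0 := by nlinarith [hρ12.1, hρ12.2]
  have h2 : (1 : ℝ) - ρ12 ≠ 0 := by nlinarith [hρ12.1, hρ12.2]
  have h3 : (1 : ℝ) - ρ12 ^ 2 ≠ 0 := by nlinarith [hρ12.1, hρ12.2]
  subst hwstar ha hb hF' hG'
  field_simp
  ring
end

section
/- In the three-dimensional asymptotic setting with unit variances, the decrease of variance σ²/(n−1) is at least the increase of squared bias Δ_bias = (1/2)(1−ρ_{12})(w_1−w_2)² + w_3(w_1−w_2)(ρ_{13}−ρ_{23}) + w_3²(ρ_{13}−ρ_{23})²/(2(1−ρ_{12})) if and only if 1−(a−b)−√(a(a−2b)) ≤ ρ_{12} ≤ 1−(a−b)+√(a(a−2b)), where a = σ²/((n−1)(w_1−w_2)²) and b = w_3(ρ_{13}−ρ_{23})/(w_1−w_2), provided a(a−2b) ≥ 0. -/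
/-- In the three-dimensional asymptotic setting with unit variances,
the decrease of variance `σ²/(n-1)` is at least the increase of squared bias
`Δ_bias = (1/2)(1-ρ₁₂)(w₁-w₂)² + w₃(w₁-w₂)(ρ₁₃-ρ₂₃) + w₃²(ρ₁₃-ρ₂₃)²/(2(1-ρ₁₂))`
if and only if `1-(a-b)-√(a(a-2b)) ≤ ρ₁₂ ≤ 1-(a-b)+√(a(a-2b))`, where
`a = σ²/((n-1)(w₁-w₂)²)` and `b = w₃(ρ₁₃-ρ₂₃)/(w₁-w₂)`, provided `a(a-2b) ≥ 0`. -/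
theorem aggregation_condition_3d
    (n : ℕ) (hn : 1 < n) (σ2 w1 w2 w3 ρ12 ρ13 ρ23 : ℝ)
    (hσ2 : 0 ≤ σ2) (hw : w1 ≠ w2)
    (hρ12 : ρ12 ∈ Set.Ioo (-1 : ℝ) 1) (hρ13 : |ρ13| ≤ 1) (hρ23 : |ρ23| ≤ 1)
    (a b : ℝ)
    (ha : a = σ2 / (((n : ℝ) - 1) * (w1 - w2) ^ 2))
    (hb : b = w3 * (ρ13 - ρ23) / (w1 - w2))
    (hdisc : 0 ≤ a * (a - 2 * b)) :
    σ2 / ((n : ℝ) - 1)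
        ≥ (1 / 2) * (1 - ρ12) * (w1 - w2) ^ 2
          + w3 * (w1 - w2) * (ρ13 - ρ23)
          + w3 ^ 2 * (ρ13 - ρ23) ^ 2 / (2 * (1 - ρ12))
      ↔ (1 - (a - b) - Real.sqrt (a * (a - 2 * b)) ≤ ρ12
          ∧ ρ12 ≤ 1 - (a - b) + Real.sqrt (a * (a - 2 * b))) := by
  have hn1 : (0:ℝ) < (n:ℝ) - 1 := by
    have : (1:ℝ) < (n:ℝ) := by exact_mod_cast hn
    linarith
  have hwne : w1 - w2 ≠ 0 := sub_ne_zero.mpr hw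
  have hc : (0:ℝ) < (w1 - w2)^2 := by positivity
  have ht : (0:ℝ) < 1 - ρ12 := by linarith [hρ12.2]
  have hσ : σ2 / ((n:ℝ) - 1) = a * (w1 - w2)^2 := by
    rw [ha]; field_simp
  have hw3 : w3 * (ρ13 - ρ23) = b * (w1 - w2) := by
    rw [hb]; field_simp
  have hw3sq : w3^2 * (ρ13 - ρ23)^2 = b^2 * (w1 - w2)^2 := by
    have := congrArg (· ^ 2) hw3
    simpa [mul_pow] using this
  have hE : (1 / 2) * (1 - ρ12) * (w1 - w2) ^ 2
          + w3 * (w1 - w2) * (ρ13 - ρ23)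
          + w3 ^ 2 * (ρ13 - ρ23) ^ 2 / (2 * (1 - ρ12))
      = (((1 - ρ12)^2 + 2*b*(1 - ρ12) + b^2) / (2 * (1 - ρ12))) * (w1 - w2)^2 := by
    have h1 : w3 * (w1 - w2) * (ρ13 - ρ23) = b * (w1 - w2)^2 := by
      rw [mul_right_comm, hw3]; ring
    rw [h1, hw3sq]
    field_simp
  have key : (σ2 / ((n:ℝ) - 1)
        ≥ (1 / 2) * (1 - ρ12) * (w1 - w2) ^ 2
          + w3 * (w1 - w2) * (ρ13 - ρ23)
          + w3 ^ 2 * (ρ13 - ρ23) ^ 2 / (2 * (1 - ρ12)))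
      ↔ ((1 - ρ12) - (a - b))^2 ≤ a * (a - 2 * b) := by
    rw [ge_iff_le, hσ, hE, mul_le_mul_iff_left₀ hc,
      div_le_iff₀ (by positivity : (0:ℝ) < 2 * (1 - ρ12))]
    have hpoly : ((1 - ρ12) - (a - b))^2 - a * (a - 2 * b)
        = (1 - ρ12)^2 + 2*b*(1 - ρ12) + b^2 - a * (2 * (1 - ρ12)) := by ring
    constructor <;> intro h <;> nlinarith [hpoly]
  rw [key]
  have habs : ((1 - ρ12) - (a - b))^2 ≤ a * (a - 2 * b)
      ↔ |(1 - ρ12) - (a - b)| ≤ Real.sqrt (a * (a - 2 * b)) := by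
    rw [← Real.sqrt_sq_eq_abs]
    exact (Real.sqrt_le_sqrt_iff hdisc).symm
  rw [habs, abs_le]
  constructor
  · rintro ⟨h1, h2⟩; constructor <;> linarith
  · rintro ⟨h1, h2⟩; constructor <;> linarith
end

section
/- In the finite-sample bivariate setting assuming only unit population variances (σ_{x_1} = σ_{x_2} = 1), the difference between the two-dimensional and one-dimensional model variances equals (σ²/(n−1)) · [ (σ̂²_{x_1} − σ̂²_{x_2})² + 2(1 − ρ)(σ̂²_{x_1} + ĉov)(σ̂²_{x_2} + ĉov) ] / [ σ̂²_{x_1} σ̂²_{x_2} (1 − ρ̂²) σ̂²_{x_1+x_2} ], where ρ = cov(x_1,x_2), ĉov = ĉov(x_1,x_2), ρ̂ = ĉov/(σ̂_{x_1} σ̂_{x_2}), σ̂²_{x_1+x_2} = σ̂²_{x_1} + σ̂²_{x_2} + 2ĉov. -/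
/-- In the finite-sample bivariate setting assuming only unit
population variances (so the population covariance equals the correlation `ρ`), the
difference between the two-dimensional and one-dimensional model variances equals
`(σ²/(n-1)) · [(σ̂²₁-σ̂²₂)² + 2(1-ρ)(σ̂²₁+ĉ)(σ̂²₂+ĉ)] / [σ̂²₁ σ̂²₂ (1-ρ̂²) σ̂²_{x₁+x₂}]`,
where `ρ̂ = ĉ/(σ̂₁σ̂₂)` and `σ̂²_{x₁+x₂} = σ̂²₁ + σ̂²₂ + 2ĉ`. -/
theorem finite_sample_variance_difference_general
    (n : ℕ) (hn : 1 < n) (σ2 s1 s2 c ρ : ℝ)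
    (hσ2 : 0 ≤ σ2) (hs1 : 0 < s1) (hs2 : 0 < s2)
    (hc : c ^ 2 < s1 * s2) (hρ : |ρ| ≤ 1)
    (Sh : ℝ) (hSh : Sh = s1 + s2 + 2 * c) (hShpos : 0 < Sh)
    (ρh : ℝ) (hρh : ρh = c / (Real.sqrt s1 * Real.sqrt s2)) :
    σ2 * (s2 + s1 - 2 * ρ * c) / (((n : ℝ) - 1) * (s1 * s2 - c ^ 2))
      - σ2 * (2 + 2 * ρ) / (((n : ℝ) - 1) * Sh)
      = (σ2 / ((n : ℝ) - 1)) *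
        (((s1 - s2) ^ 2 + 2 * (1 - ρ) * (s1 + c) * (s2 + c))
          / (s1 * s2 * (1 - ρh ^ 2) * Sh)) := by
  have hden : s1 * s2 * (1 - ρh ^ 2) = s1 * s2 - c ^ 2 := by
    have h1 : Real.sqrt s1 ^ 2 = s1 := Real.sq_sqrt hs1.le
    have h2 : Real.sqrt s2 ^ 2 = s2 := Real.sq_sqrt hs2.le
    have hne : Real.sqrt s1 * Real.sqrt s2 ≠ 0 := by positivity
    rw [hρh]
    have hmul : (Real.sqrt s1 * Real.sqrt s2) ^ 2 = s1 * s2 := by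
      rw [mul_pow, h1, h2]
    field_simp
    rw [h1, h2]
  rw [hden]
  have hn1 : (0:ℝ) < (n:ℝ) - 1 := by
    have : (1:ℝ) < (n:ℝ) := by exact_mod_cast hn
    linarith
  have hD : (0:ℝ) < s1 * s2 - c ^ 2 := by linarith
  rw [div_sub_div _ _ (mul_ne_zero hn1.ne' hD.ne') (mul_ne_zero hn1.ne' hShpos.ne'), div_mul_div_comm, div_eq_div_iff (mul_ne_zero (mul_ne_zero hn1.ne' hD.ne') (mul_ne_zero hn1.ne' hShpos.ne')) (mul_ne_zero hn1.ne' (mul_ne_zero hD.ne' hShpos.ne'))]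
  rw [hSh]
  ring
end
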